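/- Let $(P,\prec)$ be an abstract local bi-pseudobasis with locally tight spectrum $\mathcal{L}(P)$. If the 'trapping condition' holds — $q'\prec q\prec p$ and $r'\prec r\prec p$ imply $q'^\succ\cap r^\perp\mathrel{\mathsf{C}} q^\succ\cap r'^\perp$ — then every non-empty locally tight filter is an ultrafilter. -/

import Mathlib

variable {P : Type*}

/-- `p^≻`: the set of elements strictly below `p`. -/
def dnSet (prec : P → P → Prop) (p : P) : Set P := {q | prec q p}

/-- `Q^≻`: the set of elements below some element of `Q`. -/
def blwSet (prec : P → P → Prop) (Q : Set P) : Set P := {p | ∃ q ∈ Q, prec p q}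

/-- `Q^≺`: the set of elements above some element of `Q`. -/
def abvSet (prec : P → P → Prop) (Q : Set P) : Set P := {p | ∃ q ∈ Q, prec q p}

/-- `Q ≺ R` as subsets: every element of `Q` is below some element of `R`. -/
def refines (prec : P → P → Prop) (Q R : Set P) : Prop := ∀ q ∈ Q, ∃ r ∈ R, prec q r

/-- Dense cover relation `Q D R`. -/
def dCov (prec : P → P → Prop) (Q R : Set P) : Prop :=
  ∀ q ∈ blwSet prec Q, ∃ r ∈ blwSet prec R, prec r q

/-- Compact cover relation `Q C R`. -/
def cCov (prec : P → P → Prop) (Q R : Set P) : Prop :=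
  ∃ F : Finset P, dCov prec Q ↑F ∧ refines prec ↑F R

/-- Formal meet `F^` of a set. -/
def hatMeet (prec : P → P → Prop) (F : Set P) : Set P := {p | ∀ q ∈ F, prec p q}

/-- The relation is round: `p^≻ ≠ ∅` for all `p`. -/
def isRound (prec : P → P → Prop) : Prop := ∀ p : P, ∃ q, prec q p

/-- `T` is tight: `T = T^≺` and `F^` does not compactly cover `P \ T` for finite `F ⊆ T`. -/
def isTight (prec : P → P → Prop) (T : Set P) : Prop :=
  T = abvSet prec T ∧ ∀ F : Finset P, ↑F ⊆ T → ¬ cCov prec (hatMeet prec ↑F) Tᶜ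

/-- `T` is a filter: `t,u ∈ T ↔ ∃ s ∈ T, s ≺ t,u`. -/
def isFilt (prec : P → P → Prop) (T : Set P) : Prop :=
  ∀ t u, (t ∈ T ∧ u ∈ T) ↔ ∃ s ∈ T, prec s t ∧ prec s u

/-- `Q^≻` computed inside the ambient set `X`. -/
def blwIn (prec : P → P → Prop) (X Q : Set P) : Set P := {p ∈ X | ∃ q ∈ Q, prec p q}

/-- `Q^≺` computed inside the ambient set `X`. -/
def abvIn (prec : P → P → Prop) (X Q : Set P) : Set P := {p ∈ X | ∃ q ∈ Q, prec q p}

/-- Dense cover relation relativised to `X`. -/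
def dCovIn (prec : P → P → Prop) (X Q R : Set P) : Prop :=
  ∀ q ∈ blwIn prec X Q, ∃ r ∈ blwIn prec X R, prec r q

/-- Compact cover relation relativised to `X`. -/
def cCovIn (prec : P → P → Prop) (X Q R : Set P) : Prop :=
  ∃ F : Finset P, ↑F ⊆ X ∧ dCovIn prec X Q ↑F ∧ refines prec ↑F R

/-- Formal meet relativised to `X`. -/
def hatMeetIn (prec : P → P → Prop) (X F : Set P) : Set P := {p ∈ X | ∀ q ∈ F, prec p q}

/-- `T` is tight in the ambient set `X`. -/
def isTightIn (prec : P → P → Prop) (X T : Set P) : Prop :=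
  T = abvIn prec X T ∧
    ∀ F : Finset P, ↑F ⊆ T → ¬ cCovIn prec X (hatMeetIn prec X ↑F) (X \ T)

/-- `T` is locally tight: `T ∩ t^≻` is tight in `t^≻` for all `t ∈ T`. -/
def locallyTight (prec : P → P → Prop) (T : Set P) : Prop :=
  ∀ t ∈ T, isTightIn prec (dnSet prec t) (T ∩ dnSet prec t)

/-- `P` is an abstract local bi-pseudobasis (beyond transitivity and roundness). -/
def localBi (prec : P → P → Prop) : Prop :=
  ∀ p r s r' s' : P, dnSet prec r ⊆ dnSet prec p → dnSet prec s ⊆ dnSet prec p →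
    prec r' r → prec s' s →
    cCov prec (dnSet prec r' ∩ dnSet prec s') (dnSet prec r ∩ dnSet prec s)

/-- `x^⊥`: the set of elements disjoint from `x`. -/
def perpOf (prec : P → P → Prop) (x : P) : Set P :=
  {s | dnSet prec s ∩ dnSet prec x = ∅}

/-- If the trapping condition holds in an abstract local
bi-pseudobasis, then every non-empty locally tight filter is an ultrafilter. -/
theorem trapping_locallyTight_ultrafilter (prec : P → P → Prop)
    (htrans : Transitive prec) (hround : isRound prec) (hlbi : localBi prec)
    (htrap : ∀ p q q' r r' : P, prec q' q → prec q p → prec r' r → prec r p →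
      cCov prec (dnSet prec q' ∩ perpOf prec r) (dnSet prec q ∩ perpOf prec r')) :
    ∀ T : Set P, T.Nonempty → isFilt prec T → locallyTight prec T →
      ∀ V : Set P, isFilt prec V → T ⊆ V → V = T := by
  intro T hTne hTfilt hTtight V hVfilt hTV
  classical
  -- filters are upward closed
  have hTup : ∀ s v, s ∈ T → prec s v → v ∈ T := by
    intro s v hs hsv
    obtain ⟨c, hc, hcs, -⟩ := (hTfilt s s).mp ⟨hs, hs⟩
    exact ((hTfilt v v).mpr ⟨c, hc, htrans hcs hsv, htrans hcs hsv⟩).1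
  apply Set.Subset.antisymm _ hTV
  intro v hv
  by_contra hvT
  obtain ⟨t, ht⟩ := hTne
  -- find w ∈ V \ T with w ≺ t, and a chain w'' ≺ w' ≺ w in V
  obtain ⟨w, hwV, hwv, hwt⟩ := (hVfilt v t).mp ⟨hv, hTV ht⟩
  have hwT : w ∉ T := fun h => hvT (hTup w v h hwv)
  obtain ⟨w', hw'V, hw'w, -⟩ := (hVfilt w w).mp ⟨hwV, hwV⟩
  obtain ⟨w'', hw''V, hw''w', -⟩ := (hVfilt w' w').mp ⟨hw'V, hw'V⟩
  -- chain u' ≺ u ≺ t in T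
  obtain ⟨u, hu, hut, -⟩ := (hTfilt t t).mp ⟨ht, ht⟩
  obtain ⟨u', hu', hu'u, -⟩ := (hTfilt u u).mp ⟨hu, hu⟩
  -- no element of T is perpendicular to an element of V
  have hnoperp : ∀ s x, s ∈ T → x ∈ V → s ∉ perpOf prec x := by
    intro s x hs hx hperp
    obtain ⟨c, hcV, hcs, hcx⟩ := (hVfilt s x).mp ⟨hTV hs, hx⟩
    obtain ⟨c', hc'⟩ := hround c
    have hmem : c' ∈ dnSet prec s ∩ dnSet prec x :=
      ⟨htrans hc' hcs, htrans hc' hcx⟩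
    rw [perpOf, Set.mem_setOf_eq] at hperp
    rw [hperp] at hmem
    exact hmem
  -- apply trapping
  obtain ⟨G, hGd, hGr⟩ := htrap t u u' w' w'' hu'u hut hw''w' (htrans hw'w hwt)
  -- each g ∈ G is below some r_g ∈ dnSet u ∩ perpOf w''
  obtain ⟨-, hT2⟩ := hTtight t ht
  apply hT2 {u'}
  · intro x hx
    simp only [Finset.coe_singleton, Set.mem_singleton_iff] at hx
    subst hx
    exact ⟨hu', htrans hu'u hut⟩
  · refine ⟨insert w' G, ?_, ?_, ?_⟩
    · -- insert w' G ⊆ dnSet t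
      intro f hf
      simp only [Finset.coe_insert, Set.mem_insert_iff, Finset.mem_coe] at hf
      rcases hf with rfl | hfG
      · exact htrans hw'w hwt
      · obtain ⟨rg, ⟨hrgu, -⟩, hgrg⟩ := hGr f hfG
        exact htrans hgrg (htrans hrgu hut)
    · -- dense cover
      intro q hq
      obtain ⟨hqt, m, ⟨hmt, hmu'⟩, hqm⟩ := hq
      have hqu' : prec q u' := htrans hqm (hmu' u' (by simp))
      by_cases hcase : ∃ r, prec r q ∧ prec r w'
      · obtain ⟨r, hrq, hrw'⟩ := hcase
        exact ⟨r, ⟨htrans hrq hqt, w', by simp, hrw'⟩, hrq⟩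
      · -- q ⊥ w'
        have hqperp : q ∈ perpOf prec w' := by
          rw [perpOf, Set.mem_setOf_eq]
          ext r
          simp only [Set.mem_inter_iff, Set.mem_empty_iff_false, iff_false]
          rintro ⟨h1, h2⟩
          exact hcase ⟨r, h1, h2⟩
        obtain ⟨q', hq'q⟩ := hround q
        obtain ⟨r, ⟨g, hgG, hrg⟩, hrq'⟩ := hGd q' ⟨q, ⟨hqu', hqperp⟩, hq'q⟩
        obtain ⟨rg, ⟨hrgu, -⟩, hgrg⟩ := hGr g hgG
        have hrt : prec r t := htrans hrg (htrans hgrg (htrans hrgu hut))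
        exact ⟨r, ⟨hrt, g, by simp [hgG], hrg⟩, htrans hrq' hq'q⟩
    · -- refinement into dnSet t \ (T ∩ dnSet t)
      intro f hf
      simp only [Finset.coe_insert, Set.mem_insert_iff, Finset.mem_coe] at hf
      rcases hf with rfl | hfG
      · exact ⟨w, ⟨hwt, fun h => hwT h.1⟩, hw'w⟩
      · obtain ⟨rg, ⟨hrgu, hrgperp⟩, hgrg⟩ := hGr f hfG
        refine ⟨rg, ⟨htrans hrgu hut, fun h => ?_⟩, hgrg⟩
        exact hnoperp rg w'' h.1 hw''V hrgperp
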